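/- Let π : X → W be a surjection between proper metric spaces that is locally David–Semmes s-regular. Then for every compact set K ⊆ X and every point a ∈ W, the s-dimensional Hausdorff measure of π⁻¹(a) ∩ K is bounded above by a constant depending only on K. In particular, every leaf π⁻¹(a) has Hausdorff dimension at most s. -/

import Mathlib

open MeasureTheory Metric
open scoped ENNReal NNReal

/-- A surjection `π : X → W` between metric spaces is locally David–Semmes `s`-regular:
for every compact `K ⊆ X`, `π` is Lipschitz on `K` and there are `C ≥ 1`, `r₀ > 0` such
that for every ball of radius `r < r₀` in `W`, the truncated preimage `π⁻¹(B) ∩ K` can be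
covered by at most `C·r^{-s}` balls of radius `C·r` in `X`. -/
def LocallyDSRegular {X W : Type*} [MetricSpace X] [MetricSpace W]
    (π : X → W) (s : ℝ) : Prop :=
  ∀ K : Set X, IsCompact K →
    (∃ L : NNReal, LipschitzOnWith L π K) ∧
    ∃ C : ℝ, 1 ≤ C ∧ ∃ r₀ : ℝ, 0 < r₀ ∧ ∀ (w : W) (r : ℝ), 0 < r → r < r₀ →
      ∃ T : Finset X, (T.card : ℝ) ≤ C * r ^ (-s) ∧
        π ⁻¹' (ball w r) ∩ K ⊆ ⋃ x ∈ T, ball x (C * r)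


open Filter
open scoped Topology

theorem key_bound {X : Type*} [MetricSpace X] [MeasurableSpace X] [BorelSpace X]
    (s : ℝ) (hs : 0 ≤ s) (A : Set X) (C r₀ : ℝ) (hC : 1 ≤ C) (hr₀ : 0 < r₀)
    (hcov : ∀ r : ℝ, 0 < r → r < r₀ →
      ∃ T : Finset X, (T.card : ℝ) ≤ C * r ^ (-s) ∧ A ⊆ ⋃ x ∈ T, ball x (C * r)) :
    μH[s] A ≤ ENNReal.ofReal (C * (2 * C) ^ s) := by
  have hC0 : (0:ℝ) < C := lt_of_lt_of_le one_pos hC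
  set ρ : ℕ → ℝ := fun n => r₀ / (n + 2) with hρ
  have hρpos : ∀ n, 0 < ρ n := fun n => div_pos hr₀ (by positivity)
  have hρlt : ∀ n, ρ n < r₀ := by
    intro n
    rw [hρ, div_lt_iff₀ (by positivity)]
    nlinarith [Nat.cast_nonneg (α := ℝ) n]
  choose T hTcard hTcov using fun n => hcov (ρ n) (hρpos n) (hρlt n)
  have main := MeasureTheory.Measure.hausdorffMeasure_le_liminf_sum (ι := fun n => (T n : Finset X))
      s A (l := atTop) (fun n => ENNReal.ofReal (2 * (C * ρ n)))
      ?_ (fun n i => ball (i : X) (C * ρ n)) ?_ ?_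
  · refine main.trans ?_
    have hbd : ∀ n : ℕ, (∑ i : (T n : Finset X),
        EMetric.diam (ball (i : X) (C * ρ n)) ^ s) ≤ ENNReal.ofReal (C * (2 * C) ^ s) := by
      intro n
      have hdiam : ∀ i : (T n : Finset X),
          EMetric.diam (ball (i : X) (C * ρ n)) ^ s ≤ ENNReal.ofReal ((2 * (C * ρ n)) ^ s) := by
        intro i
        have h1 : EMetric.diam (ball (i : X) (C * ρ n)) ≤ ENNReal.ofReal (2 * (C * ρ n)) := by
          refine EMetric.diam_le fun x hx y hy => ?_
          rw [edist_dist]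
          refine ENNReal.ofReal_le_ofReal ?_
          have := dist_triangle x (i : X) y
          rw [mem_ball] at hx hy
          rw [dist_comm (i:X) y] at this
          linarith
        calc EMetric.diam (ball (i : X) (C * ρ n)) ^ s
            ≤ (ENNReal.ofReal (2 * (C * ρ n))) ^ s := ENNReal.rpow_le_rpow h1 hs
          _ = ENNReal.ofReal ((2 * (C * ρ n)) ^ s) := by
              rw [← ENNReal.ofReal_rpow_of_pos (by positivity)]
      calc (∑ i : (T n : Finset X), EMetric.diam (ball (i : X) (C * ρ n)) ^ s)
          ≤ ∑ _i : (T n : Finset X), ENNReal.ofReal ((2 * (C * ρ n)) ^ s) :=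
            Finset.sum_le_sum fun i _ => hdiam i
        _ = (T n).card * ENNReal.ofReal ((2 * (C * ρ n)) ^ s) := by
            simp [Finset.sum_const, mul_comm]
        _ ≤ ENNReal.ofReal (C * (ρ n) ^ (-s)) * ENNReal.ofReal ((2 * (C * ρ n)) ^ s) := by
            gcongr
            · rw [show ((T n).card : ℝ≥0∞) = ENNReal.ofReal ((T n).card : ℝ) by
                simp [ENNReal.ofReal_natCast]]
              exact ENNReal.ofReal_le_ofReal (hTcard n)
        _ = ENNReal.ofReal (C * (ρ n) ^ (-s) * (2 * (C * ρ n)) ^ s) := by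
            rw [← ENNReal.ofReal_mul (by positivity)]
        _ = ENNReal.ofReal (C * (2 * C) ^ s) := by
            congr 1
            have hρn := hρpos n
            rw [show 2 * (C * ρ n) = (2 * C) * ρ n by ring,
              Real.mul_rpow (by positivity) (le_of_lt hρn),
              Real.rpow_neg (le_of_lt hρn)]
            field_simp
    calc atTop.liminf (fun n => ∑ i : (T n : Finset X),
          EMetric.diam (ball (i : X) (C * ρ n)) ^ s)
        ≤ atTop.liminf (fun _ : ℕ => ENNReal.ofReal (C * (2 * C) ^ s)) :=
          liminf_le_liminf (Eventually.of_forall hbd)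
      _ = ENNReal.ofReal (C * (2 * C) ^ s) := liminf_const _
  · have h0 : Tendsto (fun n : ℕ => 2 * (C * ρ n)) atTop (𝓝 0) := by
      have : Tendsto (fun n : ℕ => ρ n) atTop (𝓝 0) := by
        have h2 := (tendsto_const_div_atTop_nhds_zero_nat r₀).comp
          (tendsto_add_atTop_nat 2)
        convert h2 using 2 with n
        simp only [hρ, Function.comp]
        push_cast
        ring_nf
      have := this.const_mul (2 * C)
      simpa [mul_assoc] using this
    have := (ENNReal.continuous_ofReal.tendsto 0).comp h0
    simpa [Function.comp_def] using this
  · refine Eventually.of_forall fun n => fun i => ?_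
    refine EMetric.diam_le fun x hx y hy => ?_
    rw [edist_dist]
    refine le_trans (ENNReal.ofReal_le_ofReal ?_) le_rfl
    have := dist_triangle x (i : X) y
    rw [mem_ball] at hx hy
    rw [dist_comm (i:X) y] at this
    linarith
  · refine Eventually.of_forall fun n => ?_
    intro x hx
    have := hTcov n hx
    simpa [Set.mem_iUnion] using this

theorem hausdorff_measure_of_leaf_bounded
    {X W : Type*} [MetricSpace X] [MetricSpace W]
    [ProperSpace X] [ProperSpace W] [MeasurableSpace X] [BorelSpace X]
    (π : X → W) (hsurj : Function.Surjective π) (s : ℝ) (hs : 0 ≤ s)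
    (hreg : LocallyDSRegular π s) :
    (∀ K : Set X, IsCompact K → ∃ C : ℝ≥0∞, C < ⊤ ∧
      ∀ a : W, μH[s] (π ⁻¹' {a} ∩ K) ≤ C) ∧
    ∀ a : W, dimH (π ⁻¹' {a}) ≤ ENNReal.ofReal s := by
  have part1 : ∀ K : Set X, IsCompact K → ∃ C : ℝ≥0∞, C < ⊤ ∧
      ∀ a : W, μH[s] (π ⁻¹' {a} ∩ K) ≤ C := by
    intro K hK
    obtain ⟨-, C, hC1, r₀, hr₀, hcov⟩ := hreg K hK
    refine ⟨ENNReal.ofReal (C * (2 * C) ^ s), ENNReal.ofReal_lt_top, fun a => ?_⟩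
    refine key_bound s hs _ C r₀ hC1 hr₀ fun r hr hrr₀ => ?_
    obtain ⟨T, hT1, hT2⟩ := hcov a r hr hrr₀
    refine ⟨T, hT1, fun x hx => hT2 ⟨?_, hx.2⟩⟩
    have : π x = a := hx.1
    simp [this, mem_ball, hr]
  refine ⟨part1, fun a => ?_⟩
  rcases isEmpty_or_nonempty X with hX | ⟨⟨x₀⟩⟩
  · have : π ⁻¹' {a} = (∅ : Set X) := Set.eq_empty_of_isEmpty _
    simp [this]
  · have hdecomp : π ⁻¹' {a} = ⋃ n : ℕ, π ⁻¹' {a} ∩ closedBall x₀ n := by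
      ext x
      simp only [Set.mem_iUnion, Set.mem_inter_iff, mem_closedBall]
      constructor
      · intro hx
        exact ⟨⌈dist x x₀⌉₊, hx, Nat.le_ceil _⟩
      · rintro ⟨n, hx, -⟩; exact hx
    rw [hdecomp, dimH_iUnion]
    refine iSup_le fun n => ?_
    obtain ⟨C, hClt, hCb⟩ := part1 (closedBall x₀ n) (isCompact_closedBall x₀ n)
    have hne : μH[s] (π ⁻¹' {a} ∩ closedBall x₀ n) ≠ ⊤ :=
      ne_top_of_le_ne_top hClt.ne (hCb a)
    have : μH[(s.toNNReal : ℝ)] (π ⁻¹' {a} ∩ closedBall x₀ n) ≠ ⊤ := by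
      rwa [Real.coe_toNNReal s hs]
    have hdim := dimH_le_of_hausdorffMeasure_ne_top this
    rwa [ENNReal.ofReal]
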